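/- Under the equivalence relation of the previous setting, the number of equivalence classes is at most |D(C)| + 1, where D(C) is the set of chords of D that intersect the interior of C. -/

import Mathlib

abbrev Plane := EuclideanSpace ℝ (Fin 2)

noncomputable def Lf (d : Plane × Plane) (x : Plane) : ℝ :=
  (d.2 0 - d.1 0) * (x 1 - d.1 1) - (d.2 1 - d.1 1) * (x 0 - d.1 0)

lemma Lf_combo (d : Plane × Plane) (u v : Plane) (t : ℝ) :
    Lf d ((1 - t) • u + t • v) = (1 - t) * Lf d u + t * Lf d v := by
  simp only [Lf, PiLp.add_apply, PiLp.smul_apply, smul_eq_mul]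
  ring

lemma Lf_self_left (d : Plane × Plane) : Lf d d.1 = 0 := by unfold Lf; ring

lemma Lf_self_right (d : Plane × Plane) : Lf d d.2 = 0 := by unfold Lf; ring

lemma Lf_zero_param {d : Plane × Plane} {z : Plane} (hne : d.1 ≠ d.2)
    (hz : Lf d z = 0) : ∃ t : ℝ, z = (1 - t) • d.1 + t • d.2 := by
  have hvne : d.2 0 - d.1 0 ≠ 0 ∨ d.2 1 - d.1 1 ≠ 0 := by
    by_contra h
    push_neg at h
    apply hne
    ext i
    fin_cases i
    · have := h.1; dsimp at this ⊢; linarith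
    · have := h.2; dsimp at this ⊢; linarith
  unfold Lf at hz
  rcases hvne with h0 | h1
  · refine ⟨(z 0 - d.1 0) / (d.2 0 - d.1 0), ?_⟩
    ext i
    fin_cases i
    · simp only [PiLp.add_apply, PiLp.smul_apply, smul_eq_mul, Fin.zero_eta, Fin.mk_one]
      field_simp
      ring
    · simp only [PiLp.add_apply, PiLp.smul_apply, smul_eq_mul, Fin.zero_eta, Fin.mk_one]
      field_simp
      nlinarith [hz]
  · refine ⟨(z 1 - d.1 1) / (d.2 1 - d.1 1), ?_⟩
    ext i
    fin_cases i
    · simp only [PiLp.add_apply, PiLp.smul_apply, smul_eq_mul, Fin.zero_eta, Fin.mk_one]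
      field_simp
      nlinarith [hz]
    · simp only [PiLp.add_apply, PiLp.smul_apply, smul_eq_mul, Fin.zero_eta, Fin.mk_one]
      field_simp
      ring

lemma Lf_zero_on_segment (d : Plane × Plane) {z : Plane}
    (hz : z ∈ segment ℝ d.1 d.2) : Lf d z = 0 := by
  rw [segment_eq_image] at hz
  obtain ⟨t, _, rfl⟩ := hz
  rw [Lf_combo, Lf_self_left, Lf_self_right]
  ring

lemma chord_basics (C : Set Plane) (hC : Convex ℝ C) (d : Plane × Plane)
    (hseg : segment ℝ d.1 d.2 ⊆ C) (h1 : d.1 ∈ frontier C) (h2 : d.2 ∈ frontier C)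
    (hint2 : (segment ℝ d.1 d.2 ∩ interior C).Nonempty) :
    d.1 ≠ d.2 ∧ openSegment ℝ d.1 d.2 ⊆ interior C ∧
    ∀ z ∈ C, Lf d z = 0 → z ∈ segment ℝ d.1 d.2 := by
  obtain ⟨x, hxseg, hxint⟩ := hint2
  have h1i : d.1 ∉ interior C := h1.2
  have h2i : d.2 ∉ interior C := h2.2
  have hne1 : d.1 ≠ x := fun h => h1i (h ▸ hxint)
  have hne2 : d.2 ≠ x := fun h => h2i (h ▸ hxint)
  have hdne : d.1 ≠ d.2 := by
    intro h
    rw [h, segment_same] at hxseg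
    exact hne2 hxseg.symm
  have hxopen : x ∈ openSegment ℝ d.1 d.2 :=
    mem_openSegment_of_ne_left_right hne1 hne2 hxseg
  rw [openSegment_eq_image] at hxopen
  obtain ⟨s, hs, hxeq⟩ := hxopen
  have hs0 : (0:ℝ) < s := hs.1
  have hs1 : s < 1 := hs.2
  refine ⟨hdne, ?_, ?_⟩
  · -- open segment inside interior
    intro y hy
    rw [openSegment_eq_image] at hy
    obtain ⟨t, ht, hyeq⟩ := hy
    rcases lt_trichotomy t s with hts | hts | hts
    · -- y ∈ openSegment x d.1
      have hymem : y ∈ openSegment ℝ x d.1 := by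
        rw [openSegment_eq_image]
        have hne : s ≠ 0 := ne_of_gt hs0
        refine ⟨(s - t)/s, ⟨div_pos (by linarith) hs0, ?_⟩, ?_⟩
        · rw [div_lt_one hs0]; linarith [ht.1]
        · rw [← hxeq, ← hyeq]
          match_scalars <;> field_simp <;> ring
      exact hC.openSegment_interior_closure_subset_interior hxint
        (subset_closure (hseg (left_mem_segment ℝ d.1 d.2))) hymem
    · rw [← hts] at hxeq; rw [← hyeq, hxeq]; exact hxint
    · have hymem : y ∈ openSegment ℝ x d.2 := by
        rw [openSegment_eq_image]
        have hne : (1:ℝ) - s ≠ 0 := by linarith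
        refine ⟨(t - s)/(1 - s), ⟨div_pos (by linarith) (by linarith), ?_⟩, ?_⟩
        · rw [div_lt_one (by linarith)]; linarith [ht.2]
        · rw [← hxeq, ← hyeq]
          match_scalars <;> field_simp <;> ring
      exact hC.openSegment_interior_closure_subset_interior hxint
        (subset_closure (hseg (right_mem_segment ℝ d.1 d.2))) hymem
  · -- line ∩ C ⊆ segment
    intro z hzC hLz
    obtain ⟨t, hzeq⟩ := Lf_zero_param hdne hLz
    by_cases ht : t ∈ Set.Icc (0:ℝ) 1
    · rw [segment_eq_image]
      exact ⟨t, ht, hzeq.symm⟩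
    · exfalso
      simp only [Set.mem_Icc, not_and_or, not_le] at ht
      rcases ht with ht | ht
      · -- t < 0 : d.1 ∈ openSegment x z
        apply h1i
        have hmem : d.1 ∈ openSegment ℝ x z := by
          rw [openSegment_eq_image]
          have hne : s - t ≠ 0 := by linarith
          refine ⟨s/(s - t), ⟨div_pos hs0 (by linarith), ?_⟩, ?_⟩
          · rw [div_lt_one (by linarith)]; linarith
          · rw [← hxeq, hzeq]
            match_scalars <;> field_simp <;> ring
        exact hC.openSegment_interior_closure_subset_interior hxint
          (subset_closure hzC) hmem
      · -- 1 < t : d.2 ∈ openSegment x z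
        apply h2i
        have hmem : d.2 ∈ openSegment ℝ x z := by
          rw [openSegment_eq_image]
          have hne : t - s ≠ 0 := by linarith
          refine ⟨(1 - s)/(t - s), ⟨div_pos (by linarith) (by linarith), ?_⟩, ?_⟩
          · rw [div_lt_one (by linarith)]; linarith
          · rw [← hxeq, hzeq]
            match_scalars <;> field_simp <;> ring
        exact hC.openSegment_interior_closure_subset_interior hxint
          (subset_closure hzC) hmem

lemma cross_pt (C : Set Plane) (hC : Convex ℝ C) (d : Plane × Plane)
    {a b : Plane} (ha : a ∈ C) (hb : b ∈ C)
    (hA : Lf d a < 0) (hB : 0 < Lf d b) :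
    ∃ t : ℝ, t ∈ Set.Ioo (0:ℝ) 1 ∧ (1 - t) • a + t • b ∈ C ∧
      Lf d ((1 - t) • a + t • b) = 0 ∧
      (1 - t) • a + t • b ∈ segment ℝ a b := by
  set t := (-Lf d a) / (Lf d b - Lf d a) with hts
  have hden : (0:ℝ) < Lf d b - Lf d a := by linarith
  have ht0 : 0 < t := div_pos (by linarith) hden
  have ht1 : t < 1 := by
    rw [hts, div_lt_one hden]; linarith
  refine ⟨t, ⟨ht0, ht1⟩, ?_, ?_, ?_⟩
  · exact hC ha hb (by linarith) (by linarith) (by ring)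
  · rw [Lf_combo, hts]
    field_simp
    ring
  · rw [segment_eq_image]
    exact ⟨t, ⟨le_of_lt ht0, le_of_lt ht1⟩, rfl⟩

lemma sign_sep (C : Set Plane) (hC : Convex ℝ C) (d : Plane × Plane)
    (hlineC : ∀ z ∈ C, Lf d z = 0 → z ∈ segment ℝ d.1 d.2)
    {u v : Plane} (hu : u ∈ C) (hv : v ∈ C)
    (hu' : u ∉ segment ℝ d.1 d.2) (hv' : v ∉ segment ℝ d.1 d.2) :
    segment ℝ u v ∩ segment ℝ d.1 d.2 = ∅ ↔ (0 < Lf d u ↔ 0 < Lf d v) := by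
  have hLu : Lf d u ≠ 0 := fun h => hu' (hlineC u hu h)
  have hLv : Lf d v ≠ 0 := fun h => hv' (hlineC v hv h)
  constructor
  · intro hemp
    by_contra hiff
    have hcase : (Lf d u < 0 ∧ 0 < Lf d v) ∨ (Lf d v < 0 ∧ 0 < Lf d u) := by
      rcases lt_or_gt_of_ne hLu with h | h <;> rcases lt_or_gt_of_ne hLv with h' | h'
      · exact absurd (iff_of_false (by linarith) (by linarith)) hiff
      · exact Or.inl ⟨h, h'⟩
      · exact Or.inr ⟨h', h⟩
      · exact absurd (iff_of_true h h') hiff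
    have hne : (segment ℝ u v ∩ segment ℝ d.1 d.2).Nonempty := by
      rcases hcase with ⟨h1, h2⟩ | ⟨h1, h2⟩
      · obtain ⟨t, _, hzC, hz0, hzseg⟩ := cross_pt C hC d hu hv h1 h2
        exact ⟨_, hzseg, hlineC _ hzC hz0⟩
      · obtain ⟨t, _, hzC, hz0, hzseg⟩ := cross_pt C hC d hv hu h1 h2
        rw [segment_symm]
        exact ⟨_, hzseg, hlineC _ hzC hz0⟩
    rw [hemp] at hne
    exact Set.not_nonempty_empty hne
  · intro hiff
    rw [Set.eq_empty_iff_forall_notMem]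
    rintro z ⟨hz1, hz2⟩
    have hz0 : Lf d z = 0 := Lf_zero_on_segment d hz2
    rw [segment_eq_image] at hz1
    obtain ⟨t, ht, rfl⟩ := hz1
    rw [Lf_combo] at hz0
    rcases lt_or_gt_of_ne hLu with h | h
    · have h' : Lf d v < 0 := by
        rcases lt_or_gt_of_ne hLv with h' | h'
        · exact h'
        · exact absurd (hiff.mpr h') (by linarith)
      rcases le_total (Lf d u) (Lf d v) with hc | hc
      · nlinarith [mul_nonneg (show (0:ℝ) ≤ 1 - t by linarith [ht.2]) (show 0 ≤ Lf d v - Lf d u by linarith)]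
      · nlinarith [mul_nonneg ht.1 (show 0 ≤ Lf d u - Lf d v by linarith)]
    · have h' : 0 < Lf d v := hiff.mp h
      rcases le_total (Lf d u) (Lf d v) with hc | hc
      · nlinarith [mul_nonneg ht.1 (show 0 ≤ Lf d v - Lf d u by linarith)]
      · nlinarith [mul_nonneg (show (0:ℝ) ≤ 1 - t by linarith [ht.2]) (show 0 ≤ Lf d u - Lf d v by linarith)]

lemma lam_half (C : Set Plane) (hC : Convex ℝ C) (d d' : Plane × Plane)
    (hlineC' : ∀ z ∈ C, Lf d' z = 0 → z ∈ segment ℝ d'.1 d'.2)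
    (hsegsign : ∀ w ∈ segment ℝ d'.1 d'.2, 0 ≤ Lf d w) :
    ∃ b : Bool, ∀ x ∈ C, x ∉ segment ℝ d'.1 d'.2 → Lf d x < 0 →
      decide (0 < Lf d' x) = b := by
  by_cases hex : ∃ x, x ∈ C ∧ x ∉ segment ℝ d'.1 d'.2 ∧ Lf d x < 0
  · obtain ⟨x0, hx0C, hx0s, hx0neg⟩ := hex
    refine ⟨decide (0 < Lf d' x0), ?_⟩
    intro x hxC hxs hxneg
    rw [decide_eq_decide]
    have hx' : Lf d' x ≠ 0 := fun h => hxs (hlineC' x hxC h)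
    have hx0' : Lf d' x0 ≠ 0 := fun h => hx0s (hlineC' x0 hx0C h)
    have key : ∀ a b : Plane, a ∈ C → b ∈ C → Lf d a < 0 → Lf d b < 0 →
        Lf d' a < 0 → 0 < Lf d' b → False := by
      intro a b ha hb hda hdb hna hpb
      obtain ⟨t, ht, hzC, hz0, _⟩ := cross_pt C hC d' ha hb hna hpb
      have hzseg : (1 - t) • a + t • b ∈ segment ℝ d'.1 d'.2 := hlineC' _ hzC hz0
      have := hsegsign _ hzseg
      rw [Lf_combo] at this
      nlinarith [ht.1, ht.2]
    constructor
    · intro hpos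
      rcases lt_or_gt_of_ne hx0' with h | h
      · exact absurd (key x0 x hx0C hxC hx0neg hxneg h hpos) not_false
      · exact h
    · intro hpos
      rcases lt_or_gt_of_ne hx' with h | h
      · exact absurd (key x x0 hxC hx0C hxneg hx0neg h hpos) not_false
      · exact h
  · push_neg at hex
    exact ⟨true, fun x hxC hxs hxneg => absurd hxneg (by simpa using hex x hxC hxs)⟩

lemma Lf_swap (d : Plane × Plane) (x : Plane) : Lf (d.2, d.1) x = - Lf d x := by
  unfold Lf; dsimp; ring

lemma lamin (C : Set Plane) (hC : Convex ℝ C) (d d' : Plane × Plane)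
    (hlineC : ∀ z ∈ C, Lf d z = 0 → z ∈ segment ℝ d.1 d.2)
    (hlineC' : ∀ z ∈ C, Lf d' z = 0 → z ∈ segment ℝ d'.1 d'.2)
    (hopen' : openSegment ℝ d'.1 d'.2 ⊆ interior C)
    (hdisj : openSegment ℝ d.1 d.2 ∩ openSegment ℝ d'.1 d'.2 = ∅)
    (h1i : d.1 ∉ interior C) (h2i : d.2 ∉ interior C) :
    ∃ a b : Bool, ∀ x ∈ C, x ∉ segment ℝ d.1 d.2 → x ∉ segment ℝ d'.1 d'.2 →
      decide (0 < Lf d x) = a → decide (0 < Lf d' x) = b := by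
  set g0 := Lf d d'.1 with hg0def
  set g1 := Lf d d'.2 with hg1def
  have hno : ∀ t ∈ Set.Ioo (0:ℝ) 1, (1 - t) * g0 + t * g1 ≠ 0 := by
    intro t ht h
    set w := (1 - t) • d'.1 + t • d'.2 with hw
    have hwopen : w ∈ openSegment ℝ d'.1 d'.2 := by
      rw [openSegment_eq_image]; exact ⟨t, ht, rfl⟩
    have hwint : w ∈ interior C := hopen' hwopen
    have hwL : Lf d w = 0 := by rw [hw, Lf_combo, ← hg0def, ← hg1def]; exact h
    have hwseg : w ∈ segment ℝ d.1 d.2 := hlineC w (interior_subset hwint) hwL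
    rw [← insert_endpoints_openSegment] at hwseg
    rcases hwseg with h1 | h2 | hop
    · exact h1i (h1 ▸ hwint)
    · exact h2i (h2 ▸ hwint)
    · have : w ∈ openSegment ℝ d.1 d.2 ∩ openSegment ℝ d'.1 d'.2 := ⟨hop, hwopen⟩
      rw [hdisj] at this
      exact this
  have hmix : ¬ ((0 < g0 ∧ g1 < 0) ∨ (g0 < 0 ∧ 0 < g1)) := by
    rintro (⟨h0, h1⟩ | ⟨h0, h1⟩)
    · refine hno (g0 / (g0 - g1)) ⟨div_pos h0 (by linarith), ?_⟩
        (by have hden : g0 - g1 ≠ 0 := by linarith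
            field_simp
            ring)
      rw [div_lt_one (by linarith)]; linarith
    · refine hno (g0 / (g0 - g1)) ⟨div_pos_of_neg_of_neg h0 (by linarith), ?_⟩
        (by have hden : g0 - g1 ≠ 0 := by linarith
            field_simp
            ring)
      rw [div_lt_one_of_neg (by linarith)]; linarith
  have hsegsign : (∀ w ∈ segment ℝ d'.1 d'.2, 0 ≤ Lf d w) ∨
      (∀ w ∈ segment ℝ d'.1 d'.2, Lf d w ≤ 0) := by
    have hval : ∀ w ∈ segment ℝ d'.1 d'.2, ∃ t : ℝ, 0 ≤ t ∧ t ≤ 1 ∧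
        Lf d w = (1 - t) * g0 + t * g1 := by
      intro w hw
      rw [segment_eq_image] at hw
      obtain ⟨t, ht, rfl⟩ := hw
      exact ⟨t, ht.1, ht.2, by rw [Lf_combo]⟩
    rcases le_total 0 g0 with h0 | h0 <;> rcases le_total 0 g1 with h1 | h1
    · left
      intro w hw
      obtain ⟨t, ht0, ht1, he⟩ := hval w hw
      rw [he]
      have := mul_nonneg (show (0:ℝ) ≤ 1 - t by linarith) h0
      have := mul_nonneg ht0 h1
      linarith
    · rcases eq_or_lt_of_le h0 with h0' | h0'
      · right
        intro w hw
        obtain ⟨t, ht0, ht1, he⟩ := hval w hw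
        rw [he, ← h0']
        have := mul_nonpos_of_nonneg_of_nonpos ht0 h1
        linarith
      · rcases eq_or_lt_of_le h1 with h1' | h1'
        · left
          intro w hw
          obtain ⟨t, ht0, ht1, he⟩ := hval w hw
          rw [he, h1']
          have := mul_nonneg (show (0:ℝ) ≤ 1 - t by linarith) h0
          linarith
        · exact absurd (Or.inl ⟨h0', h1'⟩) hmix
    · rcases eq_or_lt_of_le h0 with h0' | h0'
      · left
        intro w hw
        obtain ⟨t, ht0, ht1, he⟩ := hval w hw
        rw [he, h0']
        have := mul_nonneg ht0 h1
        linarith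
      · rcases eq_or_lt_of_le h1 with h1' | h1'
        · right
          intro w hw
          obtain ⟨t, ht0, ht1, he⟩ := hval w hw
          rw [he, ← h1']
          have := mul_nonpos_of_nonneg_of_nonpos (show (0:ℝ) ≤ 1 - t by linarith) h0
          linarith
        · exact absurd (Or.inr ⟨h0', h1'⟩) hmix
    · right
      intro w hw
      obtain ⟨t, ht0, ht1, he⟩ := hval w hw
      rw [he]
      have := mul_nonpos_of_nonneg_of_nonpos (show (0:ℝ) ≤ 1 - t by linarith) h0
      have := mul_nonpos_of_nonneg_of_nonpos ht0 h1
      linarith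
  rcases hsegsign with hpos | hneg
  · obtain ⟨b, hb⟩ := lam_half C hC d d' hlineC' hpos
    refine ⟨false, b, ?_⟩
    intro x hxC hxs hxs' hdec
    have hxne : Lf d x ≠ 0 := fun h => hxs (hlineC x hxC h)
    have : ¬ (0 < Lf d x) := by
      intro h
      rw [decide_eq_false_iff_not] at hdec
      exact hdec h
    exact hb x hxC hxs' (lt_of_le_of_ne (not_lt.mp this) hxne)
  · obtain ⟨b, hb⟩ := lam_half C hC (d.2, d.1) d' hlineC'
      (fun w hw => by rw [Lf_swap]; linarith [hneg w hw])
    refine ⟨true, b, ?_⟩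
    intro x hxC hxs hxs' hdec
    have hxpos : 0 < Lf d x := of_decide_eq_true hdec
    exact hb x hxC hxs' (by rw [Lf_swap]; linarith)


open Finset in
lemma sign_count {ι : Type*} [DecidableEq ι] :
    ∀ (n : ℕ) (I : Finset ι), I.card ≤ n → ∀ (F : Finset (ι → Bool)),
    (∀ f ∈ F, ∀ g ∈ F, ∀ j, j ∉ I → f j = g j) →
    (∀ i ∈ I, ∀ j ∈ I, i ≠ j → ∃ a b, ∀ f ∈ F, f i = a → f j = b) →
    F.card ≤ I.card + 1 := by
  classical
  intro n
  induction n with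
  | zero =>
    intro I hI F hout _
    rw [Nat.le_zero, Finset.card_eq_zero] at hI
    subst hI
    -- all functions equal
    rcases F.eq_empty_or_nonempty with h | ⟨f0, hf0⟩
    · simp [h]
    · have : F ⊆ {f0} := by
        intro g hg
        simp only [Finset.mem_singleton]
        funext j
        exact hout g hg f0 hf0 j (by simp)
      calc F.card ≤ ({f0} : Finset _).card := Finset.card_le_card this
        _ = 1 := Finset.card_singleton _
        _ ≤ _ := by omega
  | succ n ih =>
    intro I hI F hout hpair
    by_cases hsmall : F.card ≤ 1
    · omega
    push_neg at hsmall
    obtain ⟨f0, hf0, g0, hg0, hne⟩ := Finset.one_lt_card.mp hsmall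
    obtain ⟨i, hi⟩ : ∃ i, f0 i ≠ g0 i := by
      by_contra h
      push_neg at h
      exact hne (funext h)
    have hiI : i ∈ I := by
      by_contra h
      exact hi (hout f0 hf0 g0 hg0 i h)
    set E := I.erase i with hE
    set F0 := F.filter (fun f => f i = false) with hF0
    set F1 := F.filter (fun f => f i = true) with hF1
    have hFsplit : F.card = F0.card + F1.card := by
      have hu : F0 ∪ F1 = F := by
        apply Finset.Subset.antisymm
        · apply Finset.union_subset <;> exact Finset.filter_subset _ _
        · intro f hf
          rcases Bool.eq_false_or_eq_true (f i) with h | h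
          · exact Finset.mem_union_right _ (Finset.mem_filter.mpr ⟨hf, h⟩)
          · exact Finset.mem_union_left _ (Finset.mem_filter.mpr ⟨hf, h⟩)
      have hd : Disjoint F0 F1 := by
        rw [Finset.disjoint_left]
        intro f h0 h1
        have e0 := (Finset.mem_filter.mp h0).2
        have e1 := (Finset.mem_filter.mp h1).2
        rw [e0] at e1; exact Bool.false_ne_true e1
      rw [← hu, Finset.card_union_of_disjoint hd]
    -- J0 : coords constant on F0
    set J0 := E.filter (fun j => ∀ f ∈ F0, ∀ g ∈ F0, f j = g j) with hJ0
    set J1 := E.filter (fun j => ∀ f ∈ F1, ∀ g ∈ F1, f j = g j) with hJ1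
    have hcover : E ⊆ J0 ∪ J1 := by
      intro j hj
      have hjI : j ∈ I := Finset.mem_of_mem_erase hj
      have hji : j ≠ i := Finset.ne_of_mem_erase hj
      obtain ⟨a, b, hab⟩ := hpair i hiI j hjI (Ne.symm hji)
      rcases a with _ | _
      · -- a = false : constant on F0
        apply Finset.mem_union_left
        rw [hJ0, Finset.mem_filter]
        refine ⟨hj, fun f hf g hg => ?_⟩
        rw [hF0, Finset.mem_filter] at hf hg
        rw [hab f hf.1 hf.2, hab g hg.1 hg.2]
      · apply Finset.mem_union_right
        rw [hJ1, Finset.mem_filter]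
        refine ⟨hj, fun f hf g hg => ?_⟩
        rw [hF1, Finset.mem_filter] at hf hg
        rw [hab f hf.1 hf.2, hab g hg.1 hg.2]
    have key : ∀ (b : Bool) (Fb : Finset (ι → Bool)) (Jb : Finset ι),
        Fb ⊆ F → (∀ f ∈ Fb, f i = b) → Jb ⊆ E →
        (∀ j ∈ Jb, ∀ f ∈ Fb, ∀ g ∈ Fb, f j = g j) →
        Fb.card ≤ (E \ Jb).card + 1 := by
      intro b Fb Jb hFbF hFbi hJbE hJbconst
      have hsub : E \ Jb ⊆ I := fun j hj => Finset.mem_of_mem_erase (Finset.mem_sdiff.mp hj).1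
      have hcard : (E \ Jb).card ≤ n := by
        have h1 : (E \ Jb).card ≤ E.card := Finset.card_le_card (Finset.sdiff_subset)
        have h2 : E.card = I.card - 1 := Finset.card_erase_of_mem hiI
        omega
      refine ih (E \ Jb) hcard _ ?_ ?_
      · intro f hf g hg j hj
        by_cases hjI : j ∈ I
        · by_cases hji : j = i
          · subst hji; rw [hFbi f hf, hFbi g hg]
          · have hjE : j ∈ E := Finset.mem_erase.mpr ⟨hji, hjI⟩
            have hjJb : j ∈ Jb := by
              by_contra h
              exact hj (Finset.mem_sdiff.mpr ⟨hjE, h⟩)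
            exact hJbconst j hjJb f hf g hg
        · exact hout f (hFbF hf) g (hFbF hg) j hjI
      · intro a ha c hc hac
        obtain ⟨x, y, hxy⟩ := hpair a (hsub ha) c (hsub hc) hac
        exact ⟨x, y, fun f hf => hxy f (hFbF hf)⟩
    have h0 := key false F0 J0 (Finset.filter_subset _ _)
      (fun f hf => (Finset.mem_filter.mp hf).2) (Finset.filter_subset _ _)
      (fun j hj => (Finset.mem_filter.mp hj).2)
    have h1 := key true F1 J1 (Finset.filter_subset _ _)
      (fun f hf => (Finset.mem_filter.mp hf).2) (Finset.filter_subset _ _)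
      (fun j hj => (Finset.mem_filter.mp hj).2)
    -- card arithmetic
    have hsum : (E \ J0).card + (E \ J1).card ≤ E.card := by
      have hdisj : Disjoint (E \ J0) (E \ J1) := by
        rw [Finset.disjoint_left]
        intro j hj0 hj1
        rw [Finset.mem_sdiff] at hj0 hj1
        rcases Finset.mem_union.mp (hcover hj0.1) with h | h
        · exact hj0.2 h
        · exact hj1.2 h
      calc (E \ J0).card + (E \ J1).card = ((E \ J0) ∪ (E \ J1)).card :=
            (Finset.card_union_of_disjoint hdisj).symm
        _ ≤ E.card := Finset.card_le_card (by
            intro j hj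
            rcases Finset.mem_union.mp hj with h | h
            · exact (Finset.mem_sdiff.mp h).1
            · exact (Finset.mem_sdiff.mp h).1)
    have hEcard : E.card = I.card - 1 := Finset.card_erase_of_mem hiI
    have hIpos : 1 ≤ I.card := Finset.card_pos.mpr ⟨i, hiI⟩
    omega

/-- In the setting of the chord equivalence relation, the number of equivalence
classes is at most `|D| + 1`, where `D` is the set of pairwise non-crossing chords
of the convex polygon `C` that intersect its interior.  This is expressed by a
classifying function into `Fin (D.card + 1)`. -/
theorem chord_relation_classes_le
    (C : Set Plane) (hC : Convex ℝ C)
    (V : Finset Plane) (hV : ↑V ⊆ C)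
    (D : Finset (Plane × Plane))
    (hchord : ∀ d ∈ D, segment ℝ d.1 d.2 ⊆ C ∧
      d.1 ∈ frontier C ∧ d.2 ∈ frontier C)
    (hint : ∀ d ∈ D, (segment ℝ d.1 d.2 ∩ interior C).Nonempty)
    (hnc : ∀ d ∈ D, ∀ d' ∈ D, d ≠ d' →
      openSegment ℝ d.1 d.2 ∩ openSegment ℝ d'.1 d'.2 = ∅) :
    ∃ f : {p : Plane // p ∈ V ∧ ∀ d ∈ D, p ∉ segment ℝ d.1 d.2} → Fin (D.card + 1),
      ∀ u v : {p : Plane // p ∈ V ∧ ∀ d ∈ D, p ∉ segment ℝ d.1 d.2}, ((∀ d ∈ D, segment ℝ (u : Plane) (v : Plane) ∩ segment ℝ d.1 d.2 = ∅) ↔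
        f u = f v) := by
  classical
  have hbasic : ∀ d ∈ D, d.1 ≠ d.2 ∧ openSegment ℝ d.1 d.2 ⊆ interior C ∧
      ∀ z ∈ C, Lf d z = 0 → z ∈ segment ℝ d.1 d.2 := fun d hd =>
    chord_basics C hC d (hchord d hd).1 (hchord d hd).2.1 (hchord d hd).2.2 (hint d hd)
  set S : Set Plane := {p | p ∈ V ∧ ∀ d ∈ D, p ∉ segment ℝ d.1 d.2} with hSdef
  have hSfin : S.Finite := V.finite_toSet.subset (fun p hp => hp.1)
  set σ : Plane → (Plane × Plane → Bool) :=
    fun x e => if e ∈ D then decide (0 < Lf e x) else false with hσdef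
  set F : Finset (Plane × Plane → Bool) := hSfin.toFinset.image σ with hFdef
  -- membership of good points
  have hmemS : ∀ u : {p : Plane // p ∈ V ∧ ∀ d ∈ D, p ∉ segment ℝ d.1 d.2},
      u.1 ∈ hSfin.toFinset := fun u => (Set.Finite.mem_toFinset hSfin).mpr u.2
  have hmemF : ∀ u : {p : Plane // p ∈ V ∧ ∀ d ∈ D, p ∉ segment ℝ d.1 d.2},
      σ u.1 ∈ F := fun u => Finset.mem_image_of_mem σ (hmemS u)
  have hFcard : F.card ≤ D.card + 1 := by
    apply sign_count D.card D le_rfl F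
    · intro f hf g hg j hj
      obtain ⟨p, _, rfl⟩ := Finset.mem_image.mp hf
      obtain ⟨q, _, rfl⟩ := Finset.mem_image.mp hg
      simp only [hσdef, if_neg hj]
    · intro i hi j hj hij
      obtain ⟨a, b, hab⟩ := lamin C hC i j (hbasic i hi).2.2 (hbasic j hj).2.2
        (hbasic j hj).2.1 (hnc i hi j hj hij)
        ((hchord i hi).2.1).2 ((hchord i hi).2.2).2
      refine ⟨a, b, ?_⟩
      intro f hf hfi
      obtain ⟨p, hp, rfl⟩ := Finset.mem_image.mp hf
      rw [Set.Finite.mem_toFinset] at hp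
      have hpC : p ∈ C := hV hp.1
      simp only [hσdef, if_pos hi] at hfi
      simp only [hσdef, if_pos hj]
      exact hab p hpC (hp.2 i hi) (hp.2 j hj) hfi
  have hcard2 : Fintype.card {y // y ∈ F} ≤ Fintype.card (Fin (D.card + 1)) := by
    simpa [Fintype.card_coe] using hFcard
  obtain ⟨g⟩ := Function.Embedding.nonempty_of_card_le hcard2
  refine ⟨fun u => g ⟨σ u.1, hmemF u⟩, ?_⟩
  intro u v
  have huC : (u : Plane) ∈ C := hV u.2.1
  have hvC : (v : Plane) ∈ C := hV v.2.1
  have step : (∀ d ∈ D, segment ℝ (u : Plane) (v : Plane) ∩ segment ℝ d.1 d.2 = ∅) ↔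
      σ u.1 = σ v.1 := by
    constructor
    · intro hseg
      funext e
      by_cases he : e ∈ D
      · simp only [hσdef, if_pos he]
        exact decide_eq_decide.mpr
          ((sign_sep C hC e (hbasic e he).2.2 huC hvC (u.2.2 e he) (v.2.2 e he)).mp
            (hseg e he))
      · simp only [hσdef, if_neg he]
    · intro hσeq d hd
      apply (sign_sep C hC d (hbasic d hd).2.2 huC hvC (u.2.2 d hd) (v.2.2 d hd)).mpr
      have := congrFun hσeq d
      simp only [hσdef, if_pos hd] at this
      exact decide_eq_decide.mp this
  rw [step]
  constructor
  · intro h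
    exact congrArg g (Subtype.ext h)
  · intro h
    have := g.injective h
    exact Subtype.ext_iff.mp this
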